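/- Composing hospital-proposing Gale–Shapley with strictly individually fair hospital preferences does not guarantee fairness: there exist finite sets D, H with |D| = |H| = 4, a partition of D into clusters, strict doctor preference orders on H, probabilistic hospital preferences (one distribution over strict linear orders on D per hospital, sampled independently across hospitals) each of which is strictly individually fair with respect to the partition, and a function f mapping each preference profile in the support of the product distribution to the hospital-optimal stable matching of that profile, such that the probabilistic allocation obtained as the pushforward of the product distribution under f is not PIIF with respect to the proto-metric induced by the partition. -/
import Mathlib


open Finset

/-- A probabilistic allocation: a finitely supported probability distribution over
matchings (bijections between doctors `D` and hospitals `H`). -/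
def IsAlloc {D H : Type*} [Fintype D] [Fintype H] [DecidableEq D] [DecidableEq H]
    (π : (D ≃ H) → ℝ) : Prop :=
  (∀ m, 0 ≤ π m) ∧ (∑ m : D ≃ H, π m) = 1

/-- The prospect of doctor `i` under the allocation `π`: the probability that `i`
is matched to hospital `h`. -/
def prospect {D H : Type*} [Fintype D] [Fintype H] [DecidableEq D] [DecidableEq H]
    (π : (D ≃ H) → ℝ) (i : D) (h : H) : ℝ :=
  ∑ m : D ≃ H, if m i = h then π m else 0

/-- `p` is a probability distribution on `H`. -/
def IsDist {H : Type*} [Fintype H] (p : H → ℝ) : Prop :=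
  (∀ h, 0 ≤ p h) ∧ (∑ h : H, p h) = 1

/-- Total variation distance between two distributions on `H`. -/
noncomputable def TV {H : Type*} [Fintype H] (p q : H → ℝ) : ℝ :=
  (1 / 2) * ∑ h : H, |p h - q h|

/-- `p` stochastically dominates `q` with respect to the strict preference relation
`pref` (where `pref x y` means `x` is strictly preferred to `y`): for every `h`, the
probability of an outcome at least as good as `h` under `p` is at least that under `q`. -/
def SDom {H : Type*} [Fintype H] (pref : H → H → Prop) (p q : H → ℝ) : Prop :=
  ∀ h : H,
    (∑ h' : H, Set.indicator {x : H | pref x h ∨ x = h} q h') ≤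
      ∑ h' : H, Set.indicator {x : H | pref x h ∨ x = h} p h'

/-- Preference-informed individual fairness with respect to a (pseudo)metric `d`,
total variation distance, and the doctors' strict preferences `pref`. -/
def PIIF {D H : Type*} [Fintype D] [Fintype H] [DecidableEq D] [DecidableEq H]
    (d : D → D → ℝ) (pref : D → H → H → Prop) (π : (D ≃ H) → ℝ) : Prop :=
  ∀ i j : D, ∃ p : H → ℝ,
    IsDist p ∧ TV p (prospect π j) ≤ d i j ∧ SDom (pref i) (prospect π i) p

/-- PIIF with respect to the proto-metric induced by the cluster map `c`: the prospect
of every doctor stochastically dominates the prospect of every doctor in its cluster. -/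
def ClusterPIIF {D H K : Type*} [Fintype D] [Fintype H] [DecidableEq D] [DecidableEq H]
    (c : D → K) (pref : D → H → H → Prop) (π : (D ≃ H) → ℝ) : Prop :=
  ∀ i j : D, c i = c j → SDom (pref i) (prospect π i) (prospect π j)

/-- A probability distribution `q` over strict linear orders on the doctors
(an order is represented by its rank function, a bijection `σ : D ≃ Fin n` where
`σ i < σ j` means `i` is ranked above `j`) is *strictly individually fair* with
respect to the cluster map `c` if (i) any two doctors in the same cluster have the
same rank distribution, and (ii) for any two distinct clusters, with probability 1
one of them is entirely ranked above the other. -/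
def StrictIF {n : ℕ} {D K : Type*} [Fintype D] [DecidableEq D]
    (c : D → K) (q : (D ≃ Fin n) → ℝ) : Prop :=
  (∀ i j : D, c i = c j → ∀ k : Fin n,
      (∑ σ : D ≃ Fin n, if σ i = k then q σ else 0) =
        (∑ σ : D ≃ Fin n, if σ j = k then q σ else 0)) ∧
  (∀ k1 k2 : K, k1 ≠ k2 →
      (∀ σ : D ≃ Fin n, q σ ≠ 0 → ∀ i j : D, c i = k1 → c j = k2 → σ i < σ j) ∨
      (∀ σ : D ≃ Fin n, q σ ≠ 0 → ∀ i j : D, c i = k1 → c j = k2 → σ j < σ i))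

/-- A matching `m` is stable for the profile given by the doctors' strict preferences
`dpref` and the hospitals' strict orders `R` (rank functions over the doctors):
no doctor–hospital pair prefer each other to their partners. -/
def StableFor {n : ℕ} {D H : Type*} (dpref : D → H → H → Prop)
    (R : H → D ≃ Fin n) (m : D ≃ H) : Prop :=
  ¬ ∃ (i : D) (h : H), dpref i h (m i) ∧ R h i < R h (m.symm h)

/-- `m` is the hospital-optimal stable matching for the given profile. -/
def HospitalOptimalStable {n : ℕ} {D H : Type*} (dpref : D → H → H → Prop)
    (R : H → D ≃ Fin n) (m : D ≃ H) : Prop :=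
  StableFor dpref R m ∧
    ∀ m' : D ≃ H, StableFor dpref R m' →
      ∀ h : H, m.symm h = m'.symm h ∨ R h (m.symm h) < R h (m'.symm h)

namespace GSCE

abbrev P4 := Fin 4 ≃ Fin 4

def A : Fin 4 → P4 :=
  ![⟨![1,2,3,0], ![3,0,1,2], by intro x; fin_cases x <;> rfl, by intro x; fin_cases x <;> rfl⟩,
    ⟨![0,1,3,2], ![0,1,3,2], by intro x; fin_cases x <;> rfl, by intro x; fin_cases x <;> rfl⟩,
    Equiv.refl _,
    ⟨![1,2,3,0], ![3,0,1,2], by intro x; fin_cases x <;> rfl, by intro x; fin_cases x <;> rfl⟩]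

def B : Fin 4 → P4 := fun h => (Equiv.swap (0 : Fin 4) 1).trans (A h)

def drk : Fin 4 → P4 :=
  ![⟨![0,3,2,1], ![0,3,2,1], by intro x; fin_cases x <;> rfl, by intro x; fin_cases x <;> rfl⟩,
    ⟨![1,2,3,0], ![3,0,1,2], by intro x; fin_cases x <;> rfl, by intro x; fin_cases x <;> rfl⟩,
    ⟨![3,2,1,0], ![3,2,1,0], by intro x; fin_cases x <;> rfl, by intro x; fin_cases x <;> rfl⟩,
    ⟨![2,0,3,1], ![1,3,0,2], by intro x; fin_cases x <;> rfl, by intro x; fin_cases x <;> rfl⟩]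

def cl : Fin 4 → Fin 3 := ![0,0,1,2]

noncomputable def q : Fin 4 → P4 → ℝ :=
  fun h σ => if σ = A h then 1/2 else if σ = B h then 1/2 else 0

def mB : P4 := ⟨![0,3,2,1], ![0,3,2,1], by intro x; fin_cases x <;> rfl, by intro x; fin_cases x <;> rfl⟩
def mC : P4 := ⟨![3,0,2,1], ![1,3,2,0], by intro x; fin_cases x <;> rfl, by intro x; fin_cases x <;> rfl⟩

def M : (Fin 4 → Bool) → P4 := fun ε => if ε 0 then (if ε 3 then mB else mC) else Equiv.refl _

def e : (Fin 4 → Bool) → (Fin 4 → P4) := fun ε h => if ε h then B h else A h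

def f : (Fin 4 → P4) → P4 := fun R => M (fun h => decide (R h = B h))

lemma hAB : ∀ h : Fin 4, A h ≠ B h := by decide

lemma qA (h : Fin 4) : q h (A h) = 1/2 := by simp [q]

lemma qB (h : Fin 4) : q h (B h) = 1/2 := by
  rw [q, if_neg (Ne.symm (hAB h)), if_pos rfl]

lemma qsupp (h : Fin 4) (σ : P4) (hσ : q h σ ≠ 0) : σ = A h ∨ σ = B h := by
  by_contra hc
  push_neg at hc
  rw [q, if_neg hc.1, if_neg hc.2] at hσ
  exact hσ rfl

lemma sum_pair_support {α : Type*} [Fintype α] [DecidableEq α] (a b : α) (hab : a ≠ b)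
    (F : α → ℝ) (h0 : ∀ x, x ≠ a → x ≠ b → F x = 0) : ∑ x, F x = F a + F b := by
  rw [← Finset.sum_pair hab]
  refine (Finset.sum_subset (Finset.subset_univ _) ?_).symm
  intro x _ hx
  simp only [Finset.mem_insert, Finset.mem_singleton] at hx
  push_neg at hx
  exact h0 x hx.1 hx.2

lemma e_inj : Function.Injective e := by
  intro ε ε' hee
  funext h
  have hh := congrFun hee h
  simp only [e] at hh
  cases hε : ε h <;> cases hε' : ε' h
  · rfl
  · rw [hε, hε'] at hh; simp only [Bool.false_eq_true, if_false, if_true] at hh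
    exact absurd hh (hAB h)
  · rw [hε, hε'] at hh; simp only [Bool.false_eq_true, if_false, if_true] at hh
    exact absurd hh.symm (hAB h)
  · rfl

lemma q_e (ε : Fin 4 → Bool) (h : Fin 4) : q h (e ε h) = 1/2 := by
  by_cases hb : ε h <;> simp [e, hb, qA, qB]

lemma prod_q_e (ε : Fin 4 → Bool) : (∏ h : Fin 4, q h (e ε h)) = 1/16 := by
  rw [Fin.prod_univ_four, q_e, q_e, q_e, q_e]; norm_num

lemma f_e (ε : Fin 4 → Bool) : f (e ε) = M ε := by
  unfold f
  congr 1
  funext h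
  by_cases hb : ε h <;> simp [e, hb, hAB h]

lemma R_eq_e (R : Fin 4 → P4) (hr : ∀ h, R h = A h ∨ R h = B h) :
    R = e (fun h => decide (R h = B h)) := by
  funext h
  rcases hr h with h1 | h1 <;> simp [e, h1, hAB h]

lemma key : ∀ ε : Fin 4 → Bool,
    HospitalOptimalStable (fun i h1 h2 => drk i h1 < drk i h2) (e ε) (M ε) := by
  unfold HospitalOptimalStable StableFor
  decide

noncomputable def π : P4 → ℝ :=
  fun m => ∑ R : Fin 4 → P4, if f R = m then ∏ h : Fin 4, q h (R h) else 0

lemma prospect_eq (i h0 : Fin 4) :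
    prospect π i h0 = ∑ ε : Fin 4 → Bool, (if M ε i = h0 then (1/16 : ℝ) else 0) := by
  unfold prospect π
  have step1 : ∀ m : P4,
      (if m i = h0 then (∑ R : Fin 4 → P4, if f R = m then ∏ h, q h (R h) else 0) else 0)
        = ∑ R : Fin 4 → P4, if f R = m then (if m i = h0 then ∏ h, q h (R h) else 0) else 0 := by
    intro m
    split_ifs with hm
    · exact Finset.sum_congr rfl fun R _ => by simp [hm]
    · simp [hm]
  rw [Finset.sum_congr rfl fun m _ => step1 m, Finset.sum_comm]
  have step2 : ∀ R : Fin 4 → P4,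
      (∑ m : P4, if f R = m then (if m i = h0 then ∏ h, q h (R h) else 0) else 0)
        = if (f R) i = h0 then ∏ h, q h (R h) else 0 := by
    intro R
    rw [Finset.sum_ite_eq] -- ∑ m, if f R = m then g m else 0 = if f R ∈ univ then g (f R) else 0
    simp
  rw [Finset.sum_congr rfl fun R _ => step2 R]
  have step3 : (∑ R : Fin 4 → P4, if (f R) i = h0 then ∏ h, q h (R h) else 0)
      = ∑ R ∈ Finset.univ.image e, (if (f R) i = h0 then ∏ h, q h (R h) else 0) := by
    refine (Finset.sum_subset (Finset.subset_univ _) ?_).symm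
    intro R _ hR
    by_cases hp : (∏ h, q h (R h)) = 0
    · simp [hp]
    · exfalso
      apply hR
      have hr : ∀ h, R h = A h ∨ R h = B h := by
        intro h
        refine qsupp h (R h) fun hz => hp ?_
        exact Finset.prod_eq_zero (Finset.mem_univ h) hz
      exact Finset.mem_image.2 ⟨_, Finset.mem_univ _, (R_eq_e R hr).symm⟩
  rw [step3, Finset.sum_image (fun ε _ ε' _ hh => e_inj hh)]
  refine Finset.sum_congr rfl fun ε _ => ?_
  rw [f_e, prod_q_e]

lemma prospect_val (i h0 : Fin 4) :
    prospect π i h0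
      = ((Finset.univ.filter (fun ε : Fin 4 → Bool => M ε i = h0)).card : ℝ) * (1/16) := by
  rw [prospect_eq, Finset.sum_ite, Finset.sum_const, Finset.sum_const_zero, add_zero,
    nsmul_eq_mul]

lemma card1 : (Finset.univ.filter (fun ε : Fin 4 → Bool => M ε 1 = 0)).card = 4 := by decide
lemma card2 : (Finset.univ.filter (fun ε : Fin 4 → Bool => M ε 1 = 3)).card = 4 := by decide
lemma card3 : (Finset.univ.filter (fun ε : Fin 4 → Bool => M ε 0 = 0)).card = 12 := by decide
lemma card4 : (Finset.univ.filter (fun ε : Fin 4 → Bool => M ε 0 = 3)).card = 4 := by decide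

lemma ind_sum (g : Fin 4 → ℝ) :
    (∑ h' : Fin 4, Set.indicator {x : Fin 4 | drk 1 x < drk 1 0 ∨ x = 0} g h') = g 0 + g 3 := by
  have m0 : (0:Fin 4) ∈ {x : Fin 4 | drk 1 x < drk 1 0 ∨ x = 0} := Or.inr rfl
  have m3 : (3:Fin 4) ∈ {x : Fin 4 | drk 1 x < drk 1 0 ∨ x = 0} := Or.inl (by decide)
  have m1 : (1:Fin 4) ∉ {x : Fin 4 | drk 1 x < drk 1 0 ∨ x = 0} := fun hx =>
    (by decide : ¬(drk 1 1 < drk 1 0 ∨ (1:Fin 4) = 0)) hx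
  have m2 : (2:Fin 4) ∉ {x : Fin 4 | drk 1 x < drk 1 0 ∨ x = 0} := fun hx =>
    (by decide : ¬(drk 1 2 < drk 1 0 ∨ (2:Fin 4) = 0)) hx
  rw [Fin.sum_univ_four, Set.indicator_of_mem m0, Set.indicator_of_notMem m1,
    Set.indicator_of_notMem m2, Set.indicator_of_mem m3]
  ring

lemma hP : ∀ (h : Fin 4) (k1 k2 : Fin 3), k1 ≠ k2 →
    (∀ i j : Fin 4, cl i = k1 → cl j = k2 → A h i < A h j ∧ B h i < B h j) ∨
    (∀ i j : Fin 4, cl i = k1 → cl j = k2 → A h j < A h i ∧ B h j < B h i) := by decide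

lemma hB01 : ∀ h : Fin 4, B h 0 = A h 1 ∧ B h 1 = A h 0 := by decide

end GSCE

/-- Composing hospital-proposing Gale–Shapley with strictly
individually fair hospital preferences does not guarantee fairness: with
`|D| = |H| = 4` there exist a partition of the doctors into clusters, strict doctor
preferences (rank functions `drk`), independent probabilistic hospital preferences
`q h`, each strictly individually fair, and a map `f` sending every profile in the
support of the product distribution to the hospital-optimal stable matching of that
profile, such that the pushforward allocation of the product distribution under `f`
is not PIIF for the proto-metric. -/

theorem hospital_propose_gale_shapley_composition_fails :
    ∃ (c : Fin 4 → Fin 3) (drk : Fin 4 → Fin 4 ≃ Fin 4)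
      (q : Fin 4 → (Fin 4 ≃ Fin 4) → ℝ)
      (f : (Fin 4 → Fin 4 ≃ Fin 4) → Fin 4 ≃ Fin 4),
      (∀ h : Fin 4, IsDist (q h)) ∧
      (∀ h : Fin 4, StrictIF c (q h)) ∧
      (∀ R : Fin 4 → Fin 4 ≃ Fin 4, (∏ h : Fin 4, q h (R h)) ≠ 0 →
        HospitalOptimalStable (fun i h1 h2 => drk i h1 < drk i h2) R (f R)) ∧
      ¬ ClusterPIIF c (fun i h1 h2 => drk i h1 < drk i h2)
          (fun m : Fin 4 ≃ Fin 4 =>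
            ∑ R : Fin 4 → Fin 4 ≃ Fin 4,
              if f R = m then ∏ h : Fin 4, q h (R h) else 0) := by
  refine ⟨GSCE.cl, GSCE.drk, GSCE.q, GSCE.f, ?_, ?_, ?_, ?_⟩
  · -- IsDist
    intro h
    constructor
    · intro σ; unfold GSCE.q; split_ifs <;> norm_num
    · rw [GSCE.sum_pair_support (GSCE.A h) (GSCE.B h) (GSCE.hAB h) _
        (fun σ hσ1 hσ2 => by rw [GSCE.q, if_neg hσ1, if_neg hσ2])]
      rw [GSCE.qA, GSCE.qB]; norm_num
  · -- StrictIF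
    intro h
    constructor
    · intro i j hcc k
      have hsum : ∀ i' : Fin 4, (∑ σ : GSCE.P4, if σ i' = k then GSCE.q h σ else 0)
          = (if GSCE.A h i' = k then (1/2:ℝ) else 0)
            + (if GSCE.B h i' = k then (1/2:ℝ) else 0) := by
        intro i'
        rw [GSCE.sum_pair_support (GSCE.A h) (GSCE.B h) (GSCE.hAB h) _
          (fun σ hσ1 hσ2 => by simp [GSCE.q, hσ1, hσ2])]
        rw [GSCE.qA, GSCE.qB]
      rw [hsum i, hsum j]
      have hd : ∀ i j : Fin 4, GSCE.cl i = GSCE.cl j →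
          i = j ∨ (i = 0 ∧ j = 1) ∨ (i = 1 ∧ j = 0) := by decide
      rcases hd i j hcc with rfl | ⟨rfl, rfl⟩ | ⟨rfl, rfl⟩
      · rfl
      · rw [(GSCE.hB01 h).1, (GSCE.hB01 h).2]; ring
      · rw [(GSCE.hB01 h).1, (GSCE.hB01 h).2]; ring
    · intro k1 k2 hne
      rcases GSCE.hP h k1 k2 hne with H | H
      · left; intro σ hσ i j h1 h2
        rcases GSCE.qsupp h σ hσ with rfl | rfl
        · exact (H i j h1 h2).1
        · exact (H i j h1 h2).2
      · right; intro σ hσ i j h1 h2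
        rcases GSCE.qsupp h σ hσ with rfl | rfl
        · exact (H i j h1 h2).1
        · exact (H i j h1 h2).2
  · -- hospital-optimal stable on the support
    intro R hR
    have hr : ∀ h, R h = GSCE.A h ∨ R h = GSCE.B h := by
      intro h
      refine GSCE.qsupp h (R h) fun hz => hR ?_
      exact Finset.prod_eq_zero (Finset.mem_univ h) hz
    have hRe := GSCE.R_eq_e R hr
    rw [hRe, GSCE.f_e]
    exact GSCE.key _
  · -- not ClusterPIIF
    intro H
    have hpi : (fun m : Fin 4 ≃ Fin 4 =>
        ∑ R : Fin 4 → Fin 4 ≃ Fin 4,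
          if GSCE.f R = m then ∏ h : Fin 4, GSCE.q h (R h) else 0) = GSCE.π := rfl
    rw [hpi] at H
    have h0 := H 1 0 rfl 0
    have e1 : {x : Fin 4 | (fun i h1 h2 => GSCE.drk i h1 < GSCE.drk i h2) 1 x 0 ∨ x = 0}
        = {x : Fin 4 | GSCE.drk 1 x < GSCE.drk 1 0 ∨ x = 0} := rfl
    rw [e1] at h0
    rw [GSCE.ind_sum, GSCE.ind_sum] at h0
    rw [GSCE.prospect_val, GSCE.prospect_val, GSCE.prospect_val, GSCE.prospect_val,
      GSCE.card1, GSCE.card2, GSCE.card3, GSCE.card4] at h0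
    norm_num at h0
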